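/- Let S be an infinite type and let σ : S × S → S be a total associative binary operation (i.e., σ(σ(a,b),c) = σ(a,σ(b,c)) for all a,b,c). Then for every natural number n there exists an element z in the image of σ whose preimage under σ (the set of pairs (x,y) with σ(x,y) = z) has cardinality at least n. -/

import Mathlib

theorem total_associative_unbounded_fibers
    {S : Type*} [Infinite S] (σ : S → S → S)
    (hassoc : ∀ a b c : S, σ (σ a b) c = σ a (σ b c)) :
    ∀ n : ℕ, ∃ z : S, (∃ p : S × S, σ p.1 p.2 = z) ∧
      ∃ T : Finset (S × S), (∀ p ∈ T, σ p.1 p.2 = z) ∧ n ≤ T.card := by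
  classical
  intro n
  by_contra hcon
  push_neg at hcon
  have a : S := Classical.arbitrary S
  -- Every fiber of a left translation is finite.
  have fib : ∀ b z : S, {y : S | σ b y = z}.Finite := by
    intro b z
    by_contra hinf
    replace hinf : {y : S | σ b y = z}.Infinite := hinf
    obtain ⟨y₀, hy₀⟩ := hinf.nonempty
    obtain ⟨Y, hYsub, hYcard⟩ := hinf.exists_subset_card_eq n
    have hlt := hcon z ⟨(b, y₀), hy₀⟩ (Y.image (fun y => (b, y)))
      (by
        intro p hp
        simp only [Finset.mem_image] at hp
        obtain ⟨y, hy, rfl⟩ := hp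
        exact hYsub hy)
    rw [Finset.card_image_of_injective _ (fun y₁ y₂ h => by
      simpa using congrArg Prod.snd h), hYcard] at hlt
    exact lt_irrefl _ hlt
  -- Build a long list of distinct left divisors of a common element.
  have key : ∀ k : ℕ, ∃ (z : S) (l : List S), (∃ p : S × S, σ p.1 p.2 = z) ∧
      l.length = k ∧ l.Nodup ∧ z ∉ l ∧ ∀ x ∈ l, ∃ y, σ x y = z := by
    intro k
    induction k with
    | zero =>
      exact ⟨σ a a, [], ⟨(a, a), rfl⟩, rfl, List.nodup_nil, List.not_mem_nil, by simp⟩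
    | succ k ih =>
      obtain ⟨z, l, him, hlen, hnd, hzl, hall⟩ := ih
      have hBfin : {e : S | σ z e ∈ (z :: l)}.Finite := by
        have heq : {e : S | σ z e ∈ (z :: l)} = ⋃ w ∈ (z :: l), {e | σ z e = w} := by
          ext e; simp
        rw [heq]
        exact (List.finite_toSet _).biUnion (fun w _ => fib z w)
      obtain ⟨e, he⟩ := hBfin.infinite_compl.nonempty
      have he' : σ z e ∉ (z :: l) := he
      refine ⟨σ z e, z :: l, ⟨(z, e), rfl⟩, by simp [hlen],
        List.nodup_cons.2 ⟨hzl, hnd⟩, he', ?_⟩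
      intro x hx
      rcases List.mem_cons.1 hx with h | h
      · exact ⟨e, by rw [h]⟩
      · obtain ⟨y, hy⟩ := hall x h
        exact ⟨σ y e, by rw [← hassoc, hy]⟩
  obtain ⟨z, l, him, hlen, hnd, hzl, hall⟩ := key n
  set f : S → S := fun x => if h : ∃ y, σ x y = z then h.choose else x with hf
  set T : Finset (S × S) := l.toFinset.image (fun x => (x, f x)) with hT
  have hTmem : ∀ p ∈ T, σ p.1 p.2 = z := by
    intro p hp
    simp only [hT, Finset.mem_image, List.mem_toFinset] at hp
    obtain ⟨x, hx, rfl⟩ := hp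
    have h := hall x hx
    simp only [hf, dif_pos h]
    exact h.choose_spec
  have hcard : T.card = n := by
    rw [hT, Finset.card_image_of_injective _ (fun x₁ x₂ h => congrArg Prod.fst h),
      List.toFinset_card_of_nodup hnd, hlen]
  have := hcon z him T hTmem
  omega
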